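/- arXiv:1307.5231 — 7 statements merged into one kernel-verified Lean document; each statement's English description precedes it below -/
import Mathlib

section
/- Let K ≥ 2 and let λ₁, ..., λ_K be positive reals with λ_i > λ₁ for all i = 2, ..., K. Define, for Ψ > 0, C(Ψ) = ∫_{(0,∞)^{K-1}} exp(−Ψ / ∏_{i=2}^K η_i) · ∏_{i=2}^K η_i^{λ_i − λ₁ − 1} · exp(−∑_{i=2}^K η_i) dη₂ ⋯ dη_K. Then C(Ψ) tends to ∏_{i=2}^K Γ(λ_i − λ₁) as Ψ → 0⁺. (This is the key limit in Theorem 1(i): the density of the product of K independent Gamma(λ_i, 1) random variables equals ∏_{i=1}^K Γ(λ_i)^{−1} · Ψ^{λ₁ − 1} · C(Ψ), so its sparsity shape parameter is min_i λ_i.) -/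
open MeasureTheory Real Filter Set

/-- Key limit in Theorem 1(i) (Griffin & Brown): with `n = K - 1 ≥ 1` additional gamma
factors with shapes `l i > l1`, the function
`C(Ψ) = ∫_{(0,∞)^n} exp(-Ψ/∏ η_i) ∏ η_i^{l_i - l1 - 1} exp(-∑ η_i) dη`
tends to `∏ Γ(l_i - l1)` as `Ψ → 0⁺`. -/
theorem stmt0 (n : ℕ) (hn : 1 ≤ n) (l1 : ℝ) (hl1 : 0 < l1)
    (l : Fin n → ℝ) (hlpos : ∀ i, 0 < l i) (hl : ∀ i, l1 < l i) :
    Tendsto (fun Ψ : ℝ =>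
      ∫ η : Fin n → ℝ in Set.univ.pi fun _ => Set.Ioi (0 : ℝ),
        Real.exp (-(Ψ / ∏ i, η i)) *
          ((∏ i, η i ^ (l i - l1 - 1)) * Real.exp (-(∑ i, η i))))
      (nhdsWithin 0 (Set.Ioi 0))
      (nhds (∏ i, Real.Gamma (l i - l1))) := by
  set S : Set (Fin n → ℝ) := Set.univ.pi fun _ => Set.Ioi (0 : ℝ) with hS
  have hSmeas : MeasurableSet S := MeasurableSet.univ_pi fun _ => measurableSet_Ioi
  set g : (Fin n → ℝ) → ℝ :=
    fun η => (∏ i, η i ^ (l i - l1 - 1)) * Real.exp (-(∑ i, η i)) with hg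
  set F : Fin n → ℝ → ℝ :=
    fun i => (Set.Ioi (0 : ℝ)).indicator fun x => Real.exp (-x) * x ^ (l i - l1 - 1) with hF
  have hFint : ∀ i, Integrable (F i) := by
    intro i
    rw [hF]
    rw [integrable_indicator_iff measurableSet_Ioi]
    exact Real.GammaIntegral_convergent (by linarith [hl i])
  have hprodF : ∀ η : Fin n → ℝ, (∏ i, F i (η i)) = S.indicator g η := by
    intro η
    by_cases hη : η ∈ S
    · rw [Set.indicator_of_mem hη]
      have h1 : ∀ i, η i ∈ Set.Ioi (0 : ℝ) := fun i => hη i (Set.mem_univ i)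
      simp only [hF, hg]
      rw [Finset.prod_congr rfl (fun i _ => Set.indicator_of_mem (h1 i) _)]
      rw [Finset.prod_mul_distrib]
      rw [mul_comm]
      congr 1
      rw [← Real.exp_sum]
      congr 1
      rw [← Finset.sum_neg_distrib]
    · rw [Set.indicator_of_notMem hη]
      simp only [hS, Set.mem_pi, Set.mem_univ, forall_true_left, not_forall] at hη
      obtain ⟨i, hi⟩ := hη
      refine Finset.prod_eq_zero (Finset.mem_univ i) ?_
      simp only [hF]
      exact Set.indicator_of_notMem (by simpa using hi) _
  have hgint : IntegrableOn g S := by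
    rw [← integrable_indicator_iff hSmeas]
    exact (Integrable.fintype_prod hFint).congr (.of_forall hprodF)
  have hgval : ∫ η in S, g η = ∏ i, Real.Gamma (l i - l1) := by
    rw [← integral_indicator hSmeas]
    rw [integral_congr_ae (.of_forall fun η => (hprodF η).symm)]
    rw [MeasureTheory.integral_fintype_prod_volume_eq_prod F]
    refine Finset.prod_congr rfl fun i _ => ?_
    rw [hF, integral_indicator measurableSet_Ioi]
    exact (Real.Gamma_eq_integral (by linarith [hl i])).symm
  rw [← hgval]
  have hmeas_g : Measurable g := by
    apply Measurable.mul
    · exact Finset.measurable_prod _ fun i _ => by fun_prop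
    · exact (Finset.measurable_sum _ fun i _ => measurable_pi_apply i).neg.exp
  refine tendsto_integral_filter_of_dominated_convergence g ?_ ?_ hgint ?_
  · filter_upwards with Ψ
    refine Measurable.aestronglyMeasurable ?_
    exact ((Finset.measurable_prod _ fun i _ =>
      measurable_pi_apply i).const_div Ψ |>.neg.exp).mul hmeas_g
  · filter_upwards [self_mem_nhdsWithin] with Ψ hΨ
    filter_upwards [ae_restrict_mem hSmeas] with η hη
    have hpos : ∀ i, 0 < η i := fun i => hη i (Set.mem_univ i)
    have hprod : 0 < ∏ i, η i := Finset.prod_pos fun i _ => hpos i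
    have hg0 : 0 ≤ g η := by
      refine mul_nonneg (Finset.prod_nonneg fun i _ => ?_) (Real.exp_pos _).le
      exact Real.rpow_nonneg (hpos i).le _
    rw [Real.norm_eq_abs, abs_mul, abs_of_nonneg hg0, Real.abs_exp]
    refine mul_le_of_le_one_left hg0 ?_
    rw [Real.exp_le_one_iff, neg_nonpos]
    exact div_nonneg (le_of_lt hΨ) hprod.le
  · filter_upwards [ae_restrict_mem hSmeas] with η hη
    have hprod : 0 < ∏ i, η i := Finset.prod_pos fun i _ => hη i (Set.mem_univ i)
    have h1 : Tendsto (fun Ψ : ℝ => Real.exp (-(Ψ / ∏ i, η i)))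
        (nhdsWithin 0 (Set.Ioi 0)) (nhds 1) := by
      have : Continuous fun Ψ : ℝ => Real.exp (-(Ψ / ∏ i, η i)) := by
        continuity
      have := this.tendsto 0
      simp only [zero_div, neg_zero, Real.exp_zero] at this
      exact this.mono_left nhdsWithin_le_nhds
    simpa using h1.mul_const (g η)
end

section
/- Let a, b > 0 and let X and Y be independent random variables with X ∼ Gamma(a, 1) and Y ∼ Gamma(b, 1). Then the distribution of the product X·Y is absolutely continuous with density g(Ψ) = (1/(Γ(a)Γ(b))) · Ψ^{a−1} · ∫₀^∞ η^{b−a−1} exp(−η − Ψ/η) dη for Ψ > 0; equivalently, for every x > 0, P(X·Y ≤ x) = ∫₀^x (1/(Γ(a)Γ(b))) Ψ^{a−1} (∫₀^∞ η^{b−a−1} e^{−η − Ψ/η} dη) dΨ. -/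
open MeasureTheory Real Filter Set ProbabilityTheory

open scoped ENNReal

/-- The product of independent `Gamma(a,1)` and `Gamma(b,1)` random variables has the
density `g(Ψ) = (Γ(a)Γ(b))⁻¹ Ψ^{a-1} ∫₀^∞ η^{b-a-1} e^{-η - Ψ/η} dη` on `(0,∞)`:
for every `x > 0`, `P(X·Y ≤ x) = ∫₀^x g(Ψ) dΨ`. -/
theorem stmt1 {Ω : Type*} [MeasurableSpace Ω] (μ : Measure Ω) [IsProbabilityMeasure μ]
    (a b : ℝ) (ha : 0 < a) (hb : 0 < b)
    (X Y : Ω → ℝ) (hX : Measurable X) (hY : Measurable Y)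
    (hXlaw : μ.map X = gammaMeasure a 1)
    (hYlaw : μ.map Y = gammaMeasure b 1)
    (hindep : IndepFun X Y μ) :
    ∀ x : ℝ, 0 < x →
      (μ {ω | X ω * Y ω ≤ x}).toReal =
        ∫ Ψ in (0:ℝ)..x, (1 / (Real.Gamma a * Real.Gamma b)) * Ψ ^ (a - 1) *
          ∫ η in Set.Ioi (0:ℝ), η ^ (b - a - 1) * Real.exp (-η - Ψ / η) := by
  intro x hx
  have hΓa := Real.Gamma_pos_of_pos ha
  have hΓb := Real.Gamma_pos_of_pos hb
  set C : ℝ := 1 / (Real.Gamma a * Real.Gamma b) with hCdef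
  have hCpos : 0 < C := by positivity
  haveI hpa : IsProbabilityMeasure (gammaMeasure a 1) := isProbabilityMeasure_gammaMeasure ha one_pos
  haveI hpb : IsProbabilityMeasure (gammaMeasure b 1) := isProbabilityMeasure_gammaMeasure hb one_pos
  have hpdfa : Measurable (gammaPDF a 1) :=
    ENNReal.measurable_ofReal.comp (measurable_gammaPDFReal a 1)
  have hpdfb : Measurable (gammaPDF b 1) :=
    ENNReal.measurable_ofReal.comp (measurable_gammaPDFReal b 1)
  have hset : MeasurableSet {p : ℝ × ℝ | p.1 * p.2 ≤ x} :=
    measurableSet_le (measurable_fst.mul measurable_snd) measurable_const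
  have hmap : μ.map (fun ω => (X ω, Y ω)) = (gammaMeasure a 1).prod (gammaMeasure b 1) := by
    rw [← hXlaw, ← hYlaw]
    exact (indepFun_iff_map_prod_eq_prod_map_map hX.aemeasurable hY.aemeasurable).mp hindep
  have h1 : μ {ω | X ω * Y ω ≤ x}
      = ((gammaMeasure a 1).prod (gammaMeasure b 1)) {p : ℝ × ℝ | p.1 * p.2 ≤ x} := by
    rw [← hmap, Measure.map_apply (hX.prodMk hY) hset]
    rfl
  -- the inner (η-) lintegral
  set I : ℝ → ℝ≥0∞ := fun Ψ =>
    ∫⁻ η in Ioi (0:ℝ), ENNReal.ofReal (η ^ (b - a - 1) * Real.exp (-η - Ψ / η)) with hIdef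
  -- substitution step: section measure for fixed η > 0
  have hsub : ∀ η : ℝ, 0 < η →
      (gammaMeasure a 1) {u : ℝ | u * η ≤ x}
        = ∫⁻ Ψ in Ioc (0:ℝ) x, ENNReal.ofReal η⁻¹ * gammaPDF a 1 (Ψ * η⁻¹) := by
    intro η hη
    have hSmeas : MeasurableSet {u : ℝ | u * η ≤ x} :=
      measurableSet_le (measurable_id.mul_const η) measurable_const
    have hGmeas : Measurable ({u : ℝ | u * η ≤ x}.indicator (gammaPDF a 1)) :=
      hpdfa.indicator hSmeas
    have h2 : (gammaMeasure a 1) {u : ℝ | u * η ≤ x}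
        = ∫⁻ u, {u : ℝ | u * η ≤ x}.indicator (gammaPDF a 1) u := by
      rw [gammaMeasure, withDensity_apply _ hSmeas, lintegral_indicator hSmeas]
    have hmapv : Measure.map (fun Ψ : ℝ => Ψ * η⁻¹) volume = ENNReal.ofReal η • volume := by
      rw [Real.map_volume_mul_right (inv_ne_zero hη.ne')]
      congr 1
      rw [inv_inv, abs_of_pos hη]
    have hchg : ∫⁻ u, {u : ℝ | u * η ≤ x}.indicator (gammaPDF a 1) u
        = ENNReal.ofReal η⁻¹ *
          ∫⁻ Ψ, {u : ℝ | u * η ≤ x}.indicator (gammaPDF a 1) (Ψ * η⁻¹) := by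
      have hL : ∫⁻ Ψ, {u : ℝ | u * η ≤ x}.indicator (gammaPDF a 1) (Ψ * η⁻¹) ∂volume
          = ENNReal.ofReal η * ∫⁻ u, {u : ℝ | u * η ≤ x}.indicator (gammaPDF a 1) u := by
        rw [← lintegral_map hGmeas (measurable_mul_const _), hmapv, lintegral_smul_measure, smul_eq_mul]
      rw [hL, ← mul_assoc, ← ENNReal.ofReal_mul (by positivity),
        inv_mul_cancel₀ hη.ne', ENNReal.ofReal_one, one_mul]
    rw [h2, hchg]
    have hind : ∀ Ψ : ℝ, {u : ℝ | u * η ≤ x}.indicator (gammaPDF a 1) (Ψ * η⁻¹)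
        = (Iic x).indicator (fun Ψ => gammaPDF a 1 (Ψ * η⁻¹)) Ψ := by
      intro Ψ
      have hmem : Ψ * η⁻¹ ∈ {u : ℝ | u * η ≤ x} ↔ Ψ ∈ Iic x := by
        simp only [mem_setOf_eq, mem_Iic, mul_assoc, inv_mul_cancel₀ hη.ne', mul_one]
      by_cases h : Ψ ∈ Iic x
      · rw [indicator_of_mem h, indicator_of_mem (hmem.mpr h)]
      · rw [indicator_of_notMem h, indicator_of_notMem (fun h' => h (hmem.mp h'))]
    simp_rw [hind]
    rw [lintegral_indicator measurableSet_Iic]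
    have hsplit : ∫⁻ Ψ in Iic x, gammaPDF a 1 (Ψ * η⁻¹)
        = ∫⁻ Ψ in Ioc (0:ℝ) x, gammaPDF a 1 (Ψ * η⁻¹) := by
      rw [lintegral_Iic_eq_lintegral_Iio_add_Icc _ hx.le]
      have h0 : ∫⁻ Ψ in Iio (0:ℝ), gammaPDF a 1 (Ψ * η⁻¹) = 0 := by
        rw [setLIntegral_congr_fun measurableSet_Iio (fun Ψ (hΨ : Ψ < 0) =>
          gammaPDF_of_neg (mul_neg_of_neg_of_pos hΨ (inv_pos.mpr hη))), lintegral_zero]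
      rw [h0, zero_add]
      exact (setLIntegral_congr Ioc_ae_eq_Icc).symm
    rw [hsplit, ← lintegral_const_mul' _ _ ENNReal.ofReal_ne_top]
  -- main chain in ℝ≥0∞
  have hE : μ {ω | X ω * Y ω ≤ x}
      = ∫⁻ Ψ in Ioc (0:ℝ) x, ENNReal.ofReal (C * Ψ ^ (a - 1)) * I Ψ := by
    have h3 : ((gammaMeasure a 1).prod (gammaMeasure b 1)) {p : ℝ × ℝ | p.1 * p.2 ≤ x}
        = ∫⁻ η, (gammaMeasure a 1) {u : ℝ | u * η ≤ x} ∂(gammaMeasure b 1) := by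
      rw [Measure.prod_apply_symm hset]
      rfl
    have hFmeas : Measurable fun η => (gammaMeasure a 1) {u : ℝ | u * η ≤ x} :=
      measurable_measure_prodMk_right hset
    have h4 : ∫⁻ η, (gammaMeasure a 1) {u : ℝ | u * η ≤ x} ∂(gammaMeasure b 1)
        = ∫⁻ η, gammaPDF b 1 η * (gammaMeasure a 1) {u : ℝ | u * η ≤ x} := by
      rw [gammaMeasure, lintegral_withDensity_eq_lintegral_mul _ hpdfb hFmeas]
      rfl
    have h5 : ∫⁻ η, gammaPDF b 1 η * (gammaMeasure a 1) {u : ℝ | u * η ≤ x}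
        = ∫⁻ η in Ioi (0:ℝ), gammaPDF b 1 η * (gammaMeasure a 1) {u : ℝ | u * η ≤ x} := by
      rw [← lintegral_add_compl (μ := volume)
        (fun η => gammaPDF b 1 η * (gammaMeasure a 1) {u : ℝ | u * η ≤ x}) measurableSet_Ioi,
        compl_Ioi]
      have h0 : ∫⁻ η in Iic (0:ℝ), gammaPDF b 1 η * (gammaMeasure a 1) {u : ℝ | u * η ≤ x}
          = 0 := by
        rw [setLIntegral_congr (Iio_ae_eq_Iic (a := (0:ℝ)) (μ := volume)).symm,
          setLIntegral_congr_fun measurableSet_Iio (fun η (hη : η < 0) => by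
            rw [gammaPDF_of_neg hη, zero_mul]), lintegral_zero]
      rw [h0, add_zero]
    have h6 : ∫⁻ η in Ioi (0:ℝ), gammaPDF b 1 η * (gammaMeasure a 1) {u : ℝ | u * η ≤ x}
        = ∫⁻ η in Ioi (0:ℝ), ∫⁻ Ψ in Ioc (0:ℝ) x,
            gammaPDF b 1 η * (ENNReal.ofReal η⁻¹ * gammaPDF a 1 (Ψ * η⁻¹)) := by
      refine setLIntegral_congr_fun measurableSet_Ioi (fun η (hη : 0 < η) => ?_)
      rw [hsub η hη, ← lintegral_const_mul' (gammaPDF b 1 η) _ ENNReal.ofReal_ne_top]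
    have hjm : Measurable (Function.uncurry fun (η Ψ : ℝ) =>
        gammaPDF b 1 η * (ENNReal.ofReal η⁻¹ * gammaPDF a 1 (Ψ * η⁻¹))) := by
      apply ((hpdfb.comp measurable_fst).mul _)
      exact (ENNReal.measurable_ofReal.comp measurable_fst.inv).mul
        (hpdfa.comp (measurable_snd.mul measurable_fst.inv))
    have h7 : ∫⁻ η in Ioi (0:ℝ), ∫⁻ Ψ in Ioc (0:ℝ) x,
            gammaPDF b 1 η * (ENNReal.ofReal η⁻¹ * gammaPDF a 1 (Ψ * η⁻¹))
        = ∫⁻ Ψ in Ioc (0:ℝ) x, ∫⁻ η in Ioi (0:ℝ),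
            gammaPDF b 1 η * (ENNReal.ofReal η⁻¹ * gammaPDF a 1 (Ψ * η⁻¹)) :=
      lintegral_lintegral_swap hjm.aemeasurable
    have h8 : ∫⁻ Ψ in Ioc (0:ℝ) x, ∫⁻ η in Ioi (0:ℝ),
            gammaPDF b 1 η * (ENNReal.ofReal η⁻¹ * gammaPDF a 1 (Ψ * η⁻¹))
        = ∫⁻ Ψ in Ioc (0:ℝ) x, ENNReal.ofReal (C * Ψ ^ (a - 1)) * I Ψ := by
      refine setLIntegral_congr_fun measurableSet_Ioc (fun Ψ hΨ' => ?_)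
      obtain ⟨hΨ, _⟩ := hΨ'
      have hkey : ∀ η : ℝ, 0 < η →
          gammaPDF b 1 η * (ENNReal.ofReal η⁻¹ * gammaPDF a 1 (Ψ * η⁻¹))
            = ENNReal.ofReal (C * Ψ ^ (a - 1)) *
              ENNReal.ofReal (η ^ (b - a - 1) * Real.exp (-η - Ψ / η)) := by
        intro η hη
        rw [gammaPDF_of_nonneg hη.le,
          gammaPDF_of_nonneg (mul_nonneg hΨ.le (inv_nonneg.mpr hη.le)),
          ← ENNReal.ofReal_mul (inv_nonneg.mpr hη.le), ← ENNReal.ofReal_mul (by positivity),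
          ← ENNReal.ofReal_mul (by positivity)]
        congr 1
        have e1 : (Ψ * η⁻¹) ^ (a - 1) = Ψ ^ (a - 1) * η ^ (-(a - 1)) := by
          rw [Real.mul_rpow hΨ.le (inv_nonneg.mpr hη.le), Real.rpow_neg hη.le,
            Real.inv_rpow hη.le]
        have e2 : η ^ (b - a - 1) = η ^ (b - 1) * η⁻¹ * η ^ (-(a - 1)) := by
          rw [← Real.rpow_neg_one η, ← Real.rpow_add hη, ← Real.rpow_add hη]
          ring_nf
        have e3 : Real.exp (-η - Ψ / η) = Real.exp (-(1 * η)) * Real.exp (-(1 * (Ψ * η⁻¹))) := by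
          rw [← Real.exp_add, one_mul, one_mul, div_eq_mul_inv]
          ring_nf
        rw [e1, e2, e3, hCdef]
        simp only [Real.one_rpow]
        ring
      rw [setLIntegral_congr_fun measurableSet_Ioi (fun η hη => hkey η hη),
        lintegral_const_mul' _ _ ENNReal.ofReal_ne_top]
    rw [h1, h3, h4, h5, h6, h7, h8]
  -- measurability of the inner data
  have hImeas : Measurable I := by
    apply Measurable.lintegral_prod_right (f := fun Ψ η =>
      ENNReal.ofReal (η ^ (b - a - 1) * Real.exp (-η - Ψ / η)))
    apply ENNReal.measurable_ofReal.comp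
    exact (measurable_snd.pow measurable_const).mul
      ((measurable_snd.neg.sub (measurable_fst.div measurable_snd)).exp)
  have hKmeas : Measurable fun Ψ : ℝ => ENNReal.ofReal (C * Ψ ^ (a - 1)) :=
    ENNReal.measurable_ofReal.comp (measurable_const.mul (measurable_id.pow measurable_const))
  have hEne : ∫⁻ Ψ in Ioc (0:ℝ) x, ENNReal.ofReal (C * Ψ ^ (a - 1)) * I Ψ ≠ ⊤ := by
    rw [← hE]; exact measure_ne_top μ _
  have haefin : ∀ᵐ Ψ ∂(volume.restrict (Ioc (0:ℝ) x)),
      ENNReal.ofReal (C * Ψ ^ (a - 1)) * I Ψ < ⊤ :=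
    ae_lt_top (hKmeas.mul hImeas) hEne
  -- relation between the real inner integral and I
  have hJ : ∀ Ψ : ℝ, (∫ η in Ioi (0:ℝ), η ^ (b - a - 1) * Real.exp (-η - Ψ / η))
      = (I Ψ).toReal := by
    intro Ψ
    rw [hIdef]
    rw [integral_eq_lintegral_of_nonneg_ae]
    · refine (ae_restrict_iff' measurableSet_Ioi).mpr (ae_of_all _ fun η (hη : 0 < η) => ?_)
      have := Real.rpow_nonneg hη.le (b - a - 1)
      positivity
    · refine Measurable.aestronglyMeasurable ?_
      exact (measurable_id.pow measurable_const).mul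
        ((measurable_id.neg.sub (measurable_const.div measurable_id)).exp)
  -- final conversion
  rw [intervalIntegral.integral_of_le hx.le]
  rw [integral_eq_lintegral_of_nonneg_ae]
  · rw [h1] at hE
    rw [← h1] at hE
    have hcong : ∫⁻ Ψ in Ioc (0:ℝ) x, ENNReal.ofReal
          (C * Ψ ^ (a - 1) * ∫ η in Ioi (0:ℝ), η ^ (b - a - 1) * Real.exp (-η - Ψ / η))
        = ∫⁻ Ψ in Ioc (0:ℝ) x, ENNReal.ofReal (C * Ψ ^ (a - 1)) * I Ψ := by
      refine lintegral_congr_ae ?_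
      filter_upwards [haefin, ae_restrict_mem measurableSet_Ioc] with Ψ hfin hΨ'
      obtain ⟨hΨ, _⟩ := hΨ'
      have hKne : ENNReal.ofReal (C * Ψ ^ (a - 1)) ≠ 0 := by
        rw [ne_eq, ENNReal.ofReal_eq_zero, not_le]
        positivity
      have hItop : I Ψ ≠ ⊤ := by
        intro h
        rw [h, ENNReal.mul_top hKne] at hfin
        exact absurd hfin (lt_irrefl ⊤)
      rw [hJ Ψ, ENNReal.ofReal_mul (by positivity), ENNReal.ofReal_toReal hItop]
    rw [hcong, ← hE]
  · refine (ae_restrict_iff' measurableSet_Ioc).mpr (ae_of_all _ fun Ψ hΨ' => ?_)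
    obtain ⟨hΨ, _⟩ := hΨ'
    have hJnn : 0 ≤ ∫ η in Ioi (0:ℝ), η ^ (b - a - 1) * Real.exp (-η - Ψ / η) := by
      refine setIntegral_nonneg measurableSet_Ioi fun η hη => ?_
      have := Real.rpow_nonneg (le_of_lt (hη : (0:ℝ) < η)) (b - a - 1)
      positivity
    positivity
  · refine Measurable.aestronglyMeasurable ?_
    refine (measurable_const.mul (measurable_id.pow measurable_const)).mul ?_
    have : StronglyMeasurable fun p : ℝ × ℝ => p.2 ^ (b - a - 1) * Real.exp (-p.2 - p.1 / p.2) := by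
      refine Measurable.stronglyMeasurable ?_
      exact (measurable_snd.pow measurable_const).mul
        ((measurable_snd.neg.sub (measurable_fst.div measurable_snd)).exp)
    exact (this.integral_prod_right').measurable
end

section
/- Let K ≥ 2, let λ₁, ..., λ_K and c₁, ..., c_K be positive reals with λ_i > λ₁ for all i = 2, ..., K. Define, for Ψ > 0, C(Ψ) = ∫_{(0,∞)^{K-1}} (1 + Ψ / ∏_{i=2}^K η_i)^{−(λ₁+c₁)} · ∏_{i=2}^K η_i^{λ_i − λ₁ − 1} (1 + η_i)^{−(λ_i + c_i)} dη₂ ⋯ dη_K. Then C(Ψ) tends to ∏_{i=2}^K Γ(λ_i − λ₁)Γ(λ₁ + c_i)/Γ(λ_i + c_i) as Ψ → 0⁺. (This is the key limit in Theorem 2(i): the density of the product of K independent GG(λ_i, c_i, 1) random variables is proportional to Ψ^{λ₁−1} C(Ψ), so its sparsity shape parameter is min_i λ_i.) -/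
open MeasureTheory Real Filter Set

lemma beta_ioo_eq (a b : ℝ) (ha : 0 < a) (hb : 0 < b) :
    ∫ t in Ioo (0:ℝ) 1, t ^ (a-1) * (1-t) ^ (b-1) =
      Real.Gamma a * Real.Gamma b / Real.Gamma (a+b) := by
  have hcongr : ∀ᵐ (x : ℝ) ∂(volume.restrict (Ioo (0:ℝ) 1)),
      (x:ℂ) ^ ((a:ℂ)-1) * (1-(x:ℂ)) ^ ((b:ℂ)-1) = ((x ^ (a-1) * (1-x) ^ (b-1) : ℝ) : ℂ) := by
    filter_upwards [ae_restrict_mem measurableSet_Ioo] with x hx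
    obtain ⟨hx0, hx1⟩ := hx
    rw [show ((a:ℂ)-1) = ((a-1:ℝ):ℂ) by push_cast; ring,
      show ((b:ℂ)-1) = ((b-1:ℝ):ℂ) by push_cast; ring,
      show (1 - (x:ℂ)) = ((1-x:ℝ):ℂ) by push_cast; ring,
      ← Complex.ofReal_cpow hx0.le, ← Complex.ofReal_cpow (by linarith : (0:ℝ) ≤ 1 - x),
      ← Complex.ofReal_mul]
  have hβ : Complex.betaIntegral (a:ℂ) (b:ℂ)
      = ((∫ t in Ioo (0:ℝ) 1, t ^ (a-1) * (1-t) ^ (b-1) : ℝ) : ℂ) := by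
    rw [Complex.betaIntegral, intervalIntegral.integral_of_le (by norm_num : (0:ℝ) ≤ 1),
      ← MeasureTheory.Measure.restrict_congr_set Ioo_ae_eq_Ioc,
      integral_congr_ae hcongr]
    exact integral_ofReal
  have hG := Complex.Gamma_mul_Gamma_eq_betaIntegral
    (by simpa using ha : 0 < (a:ℂ).re) (by simpa using hb : 0 < (b:ℂ).re)
  rw [hβ] at hG
  have hab : Real.Gamma (a+b) ≠ 0 := (Real.Gamma_pos_of_pos (by linarith)).ne'
  have : ((Real.Gamma a * Real.Gamma b : ℝ) : ℂ)
      = ((Real.Gamma (a+b) * ∫ t in Ioo (0:ℝ) 1, t ^ (a-1) * (1-t) ^ (b-1) : ℝ) : ℂ) := by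
    push_cast [← Complex.Gamma_ofReal]
    simpa using hG
  have h2 := Complex.ofReal_injective this
  field_simp
  linarith [h2]

lemma beta_ioo_integrable (a b : ℝ) (ha : 0 < a) (hb : 0 < b) :
    IntegrableOn (fun t : ℝ => t ^ (a-1) * (1-t) ^ (b-1)) (Ioo (0:ℝ) 1) := by
  have h := (Complex.betaIntegral_convergent
    (by simpa using ha : 0 < ((a:ℂ)).re) (by simpa using hb : 0 < ((b:ℂ)).re)).1
  have h' : Integrable (fun x : ℝ => (x:ℂ) ^ ((a:ℂ)-1) * (1-(x:ℂ)) ^ ((b:ℂ)-1))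
      (volume.restrict (Ioo (0:ℝ) 1)) := h.mono_set Ioo_subset_Ioc_self
  have hcongr : ∀ᵐ (x : ℝ) ∂(volume.restrict (Ioo (0:ℝ) 1)),
      (x:ℂ) ^ ((a:ℂ)-1) * (1-(x:ℂ)) ^ ((b:ℂ)-1) = ((x ^ (a-1) * (1-x) ^ (b-1) : ℝ) : ℂ) := by
    filter_upwards [ae_restrict_mem measurableSet_Ioo] with x hx
    obtain ⟨hx0, hx1⟩ := hx
    rw [show ((a:ℂ)-1) = ((a-1:ℝ):ℂ) by push_cast; ring,
      show ((b:ℂ)-1) = ((b-1:ℝ):ℂ) by push_cast; ring,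
      show (1 - (x:ℂ)) = ((1-x:ℝ):ℂ) by push_cast; ring,
      ← Complex.ofReal_cpow hx0.le, ← Complex.ofReal_cpow (by linarith : (0:ℝ) ≤ 1 - x),
      ← Complex.ofReal_mul]
  have h2 : Integrable (fun x : ℝ => ((x ^ (a-1) * (1-x) ^ (b-1) : ℝ) : ℂ))
      (volume.restrict (Ioo (0:ℝ) 1)) := h'.congr hcongr
  simpa [IntegrableOn] using h2.re

open MeasureTheory Real Filter Set

lemma cov_deriv : ∀ t ∈ Ioo (0:ℝ) 1,
    HasDerivWithinAt (fun t : ℝ => t / (1 - t)) ((1 - t)^2)⁻¹ (Ioo (0:ℝ) 1) t := by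
  intro t ht
  have h1 : (1:ℝ) - t ≠ 0 := by have := ht.2; intro h; linarith [h]
  have h : HasDerivWithinAt (fun t : ℝ => t / (1 - t))
      ((1 * (1 - t) - t * (-1)) / (1 - t) ^ 2) (Ioo (0:ℝ) 1) t := by
    exact ((hasDerivAt_id' t).div ((hasDerivAt_id' t).const_sub 1) h1).hasDerivWithinAt
      (s := Ioo (0:ℝ) 1)
  convert h using 1
  rw [show (1 * (1 - t) - t * (-1)) = (1:ℝ) by ring, one_div]

lemma cov_inj : InjOn (fun t : ℝ => t / (1 - t)) (Ioo (0:ℝ) 1) := by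
  intro x hx y hy h
  have hx1 : (1:ℝ) - x ≠ 0 := by have := hx.2; intro h'; linarith
  have hy1 : (1:ℝ) - y ≠ 0 := by have := hy.2; intro h'; linarith
  field_simp at h
  linarith

lemma cov_image : (fun t : ℝ => t / (1 - t)) '' (Ioo (0:ℝ) 1) = Ioi (0:ℝ) := by
  ext y
  constructor
  · rintro ⟨t, ht, rfl⟩
    exact div_pos ht.1 (by linarith [ht.2])
  · intro hy
    refine ⟨y / (1 + y), ⟨div_pos hy (by linarith [mem_Ioi.mp hy]), ?_⟩, ?_⟩
    · rw [div_lt_one (by linarith [mem_Ioi.mp hy])]; linarith [mem_Ioi.mp hy]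
    · have h1 : (1:ℝ) + y ≠ 0 := by have := mem_Ioi.mp hy; intro h; linarith
      field_simp
      ring

lemma cov_integrand (a b : ℝ) : ∀ t ∈ Ioo (0:ℝ) 1,
    |((1 - t)^2)⁻¹| • ((t / (1 - t)) ^ (a-1) * (1 + t / (1 - t)) ^ (-(a+b)))
      = t ^ (a-1) * (1-t) ^ (b-1) := by
  intro t ht
  have ht0 := ht.1
  have hu : (0:ℝ) < 1 - t := by linarith [ht.2]
  have h1 : 1 + t / (1 - t) = (1 - t)⁻¹ := by field_simp; ring
  rw [smul_eq_mul, abs_of_pos (by positivity), h1,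
    Real.div_rpow ht0.le hu.le, ← Real.rpow_natCast (1-t) 2,
    Real.inv_rpow hu.le, ← Real.rpow_neg hu.le, ← Real.rpow_neg hu.le,
    div_eq_mul_inv, ← Real.rpow_neg hu.le]
  rw [show (((1-t) ^ (-(2:ℕ):ℝ)) * (t ^ (a-1) * (1-t) ^ (-(a-1)) * (1-t) ^ (-(-(a+b))))
      = t ^ (a-1) * ((1-t) ^ (-(2:ℕ):ℝ) * (1-t) ^ (-(a-1)) * (1-t) ^ (-(-(a+b))))) by ring,
    ← Real.rpow_add hu, ← Real.rpow_add hu]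
  congr 1
  congr 1
  push_cast
  ring

lemma key1D_eq (a b : ℝ) (ha : 0 < a) (hb : 0 < b) :
    ∫ x in Ioi (0:ℝ), x ^ (a-1) * (1+x) ^ (-(a+b)) =
      Real.Gamma a * Real.Gamma b / Real.Gamma (a+b) := by
  rw [← cov_image, integral_image_eq_integral_abs_deriv_smul measurableSet_Ioo cov_deriv cov_inj]
  rw [← beta_ioo_eq a b ha hb]
  exact setIntegral_congr_fun measurableSet_Ioo (cov_integrand a b)

lemma key1D_integrable (a b : ℝ) (ha : 0 < a) (hb : 0 < b) :
    IntegrableOn (fun x : ℝ => x ^ (a-1) * (1+x) ^ (-(a+b))) (Ioi (0:ℝ)) := by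
  rw [← cov_image, integrableOn_image_iff_integrableOn_abs_deriv_smul
    measurableSet_Ioo cov_deriv cov_inj]
  exact (beta_ioo_integrable a b ha hb).congr_fun
    (fun t ht => (cov_integrand a b t ht).symm) measurableSet_Ioo
lemma indicator_pi_prod {n : ℕ} (g : Fin n → ℝ → ℝ) (η : Fin n → ℝ) :
    (Set.univ.pi fun _ => Ioi (0:ℝ)).indicator (fun η : Fin n → ℝ => ∏ i, g i (η i)) η
      = ∏ i, (Ioi (0:ℝ)).indicator (g i) (η i) := by
  by_cases h : η ∈ Set.univ.pi fun _ => Ioi (0:ℝ)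
  · rw [indicator_of_mem h]
    exact Finset.prod_congr rfl fun i _ => (indicator_of_mem (h i trivial) _).symm
  · rw [indicator_of_notMem h]
    simp only [Set.mem_pi, Set.mem_univ, forall_true_left, not_forall] at h
    obtain ⟨i, hi⟩ := h
    exact (Finset.prod_eq_zero (Finset.mem_univ i) (indicator_of_notMem hi _)).symm

/-- Key limit in Theorem 2(i) (Griffin & Brown): with `n = K - 1 ≥ 1` additional
gamma-gamma factors with shapes `l i > l1` and tail parameters `c i`, the function
`C(Ψ) = ∫_{(0,∞)^n} (1 + Ψ/∏ η_i)^{-(l1+c1)} ∏ η_i^{l_i - l1 - 1} (1 + η_i)^{-(l_i + c_i)} dη`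
tends to `∏ Γ(l_i - l1) Γ(l1 + c_i) / Γ(l_i + c_i)` as `Ψ → 0⁺`. -/
theorem stmt3 (n : ℕ) (hn : 1 ≤ n) (l1 c1 : ℝ) (hl1 : 0 < l1) (hc1 : 0 < c1)
    (l c : Fin n → ℝ) (hlpos : ∀ i, 0 < l i) (hcpos : ∀ i, 0 < c i)
    (hl : ∀ i, l1 < l i) :
    Tendsto (fun Ψ : ℝ =>
      ∫ η : Fin n → ℝ in Set.univ.pi fun _ => Set.Ioi (0 : ℝ),
        (1 + Ψ / ∏ i, η i) ^ (-(l1 + c1)) *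
          ∏ i, η i ^ (l i - l1 - 1) * (1 + η i) ^ (-(l i + c i)))
      (nhdsWithin 0 (Set.Ioi 0))
      (nhds (∏ i, Real.Gamma (l i - l1) * Real.Gamma (l1 + c i) /
        Real.Gamma (l i + c i))) := by
  have ha : ∀ i, 0 < l i - l1 := fun i => sub_pos.mpr (hl i)
  have hb : ∀ i, 0 < l1 + c i := fun i => by linarith [hcpos i]
  set S : Set (Fin n → ℝ) := Set.univ.pi fun _ => Set.Ioi (0:ℝ) with hS
  have hSm : MeasurableSet S := MeasurableSet.univ_pi fun _ => measurableSet_Ioi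
  set g : Fin n → ℝ → ℝ := fun i x => x ^ (l i - l1 - 1) * (1 + x) ^ (-(l i + c i)) with hg
  set bound : (Fin n → ℝ) → ℝ := fun η => ∏ i, g i (η i) with hbound
  have h1int : ∀ i, IntegrableOn (g i) (Ioi (0:ℝ)) := by
    intro i
    have := key1D_integrable (l i - l1) (l1 + c i) (ha i) (hb i)
    rw [show l i - l1 + (l1 + c i) = l i + c i by ring] at this
    exact this
  have h1eq : ∀ i, ∫ x in Ioi (0:ℝ), g i x
      = Real.Gamma (l i - l1) * Real.Gamma (l1 + c i) / Real.Gamma (l i + c i) := by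
    intro i
    have := key1D_eq (l i - l1) (l1 + c i) (ha i) (hb i)
    rw [show l i - l1 + (l1 + c i) = l i + c i by ring] at this
    exact this
  have hbound_int : Integrable bound ((volume : Measure (Fin n → ℝ)).restrict S) := by
    have hind : Integrable (S.indicator bound) (volume : Measure (Fin n → ℝ)) → Integrable bound ((volume : Measure (Fin n → ℝ)).restrict S) :=
      fun h => (integrable_indicator_iff hSm).1 h
    apply hind
    have heq : S.indicator bound = fun η => ∏ i, (Ioi (0:ℝ)).indicator (g i) (η i) := by
      funext η; exact indicator_pi_prod g η
    rw [heq]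
    exact MeasureTheory.Integrable.fintype_prod
      (fun i => (integrable_indicator_iff measurableSet_Ioi).2 (h1int i))
  have hbound_eq : ∫ η in S, bound η
      = ∏ i, Real.Gamma (l i - l1) * Real.Gamma (l1 + c i) / Real.Gamma (l i + c i) := by
    rw [← integral_indicator hSm]
    have heq : S.indicator bound = fun η => ∏ i, (Ioi (0:ℝ)).indicator (g i) (η i) := by
      funext η; exact indicator_pi_prod g η
    rw [heq, MeasureTheory.integral_fintype_prod_volume_eq_prod
      (f := fun i x => (Ioi (0:ℝ)).indicator (g i) x)]
    exact Finset.prod_congr rfl fun i _ => by rw [integral_indicator measurableSet_Ioi, h1eq i]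
  have hmeas : ∀ Ψ : ℝ, AEStronglyMeasurable
      (fun η : Fin n → ℝ => (1 + Ψ / ∏ i, η i) ^ (-(l1 + c1)) * ∏ i, g i (η i))
      (volume.restrict S) := by
    intro Ψ
    apply Measurable.aestronglyMeasurable
    fun_prop
  have key := MeasureTheory.tendsto_integral_filter_of_dominated_convergence
    (μ := volume.restrict S) (l := nhdsWithin (0:ℝ) (Set.Ioi 0))
    (F := fun Ψ η => (1 + Ψ / ∏ i, η i) ^ (-(l1 + c1)) * ∏ i, g i (η i))
    (f := bound) bound
    (Eventually.of_forall hmeas)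
    (by
      filter_upwards [self_mem_nhdsWithin] with Ψ hΨ
      filter_upwards [ae_restrict_mem hSm] with η hη
      have hηpos : ∀ i, 0 < η i := fun i => hη i trivial
      have hprod : (0:ℝ) < ∏ i, η i := Finset.prod_pos fun i _ => hηpos i
      have hbp : 0 ≤ bound η := Finset.prod_nonneg fun i _ => by
        have := hηpos i
        positivity
      have hbase : (1:ℝ) ≤ 1 + Ψ / ∏ i, η i := by
        have : 0 ≤ Ψ / ∏ i, η i := div_nonneg (le_of_lt hΨ) hprod.le
        linarith
      have hfac : (1 + Ψ / ∏ i, η i) ^ (-(l1 + c1)) ≤ 1 :=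
        Real.rpow_le_one_of_one_le_of_nonpos hbase (by linarith)
      have hfp : 0 ≤ (1 + Ψ / ∏ i, η i) ^ (-(l1 + c1)) :=
        Real.rpow_nonneg (by linarith) _
      rw [Real.norm_eq_abs, abs_of_nonneg (mul_nonneg hfp hbp)]
      calc (1 + Ψ / ∏ i, η i) ^ (-(l1 + c1)) * bound η
          ≤ 1 * bound η := mul_le_mul_of_nonneg_right hfac hbp
        _ = bound η := one_mul _)
    hbound_int
    (by
      filter_upwards [ae_restrict_mem hSm] with η hη
      have hηpos : ∀ i, 0 < η i := fun i => hη i trivial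
      have hprod : (0:ℝ) < ∏ i, η i := Finset.prod_pos fun i _ => hηpos i
      have h1 : Tendsto (fun Ψ : ℝ => 1 + Ψ / ∏ i, η i) (nhdsWithin 0 (Set.Ioi 0)) (nhds 1) := by
        have : Tendsto (fun Ψ : ℝ => 1 + Ψ / ∏ i, η i) (nhds 0) (nhds (1 + 0 / ∏ i, η i)) :=
          Tendsto.const_add 1 (tendsto_id.div_const _)
        simpa using this.mono_left nhdsWithin_le_nhds
      have h2 : Tendsto (fun Ψ : ℝ => (1 + Ψ / ∏ i, η i) ^ (-(l1 + c1)))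
          (nhdsWithin 0 (Set.Ioi 0)) (nhds ((1:ℝ) ^ (-(l1 + c1)))) :=
        ((Real.continuousAt_rpow_const 1 (-(l1 + c1)) (Or.inl one_ne_zero)).tendsto).comp h1
      rw [Real.one_rpow] at h2
      simpa [hbound] using h2.mul_const (∏ i, g i (η i)))
  rw [hbound_eq] at key
  exact key
end

section
/- Let λ₁, λ₂, c, d > 0 and define C(y) = ∫₀^1 (1−z)^{λ₁−1} z^{λ₂−1} [1 + y(1−z)/d]^{−(λ₁+c)} [1 + yz/d]^{−(λ₂+c)} dz for y > 0. Then C(y) tends to ∫₀^1 (1−z)^{λ₁−1} z^{λ₂−1} dz = Γ(λ₁)Γ(λ₂)/Γ(λ₁+λ₂) as y → 0⁺. Consequently the density of the sum of two independent GG(λ₁, c, d) and GG(λ₂, c, d) random variables behaves like a constant multiple of y^{λ₁+λ₂−1} near 0, so the sparsity shape parameter of the sum is λ₁ + λ₂ (Theorem 2(ii)). -/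
open MeasureTheory Real Filter Set

/-- The gamma-gamma `GG(l, c, d)` density. -/
noncomputable def ggPDF (l c d Ψ : ℝ) : ℝ :=
  (1 / d) ^ l * (Real.Gamma (l + c) / (Real.Gamma l * Real.Gamma c)) *
    Ψ ^ (l - 1) * (1 + Ψ / d) ^ (-(l + c))

/-- Theorem 2(ii) (Griffin & Brown): `C(y) → ∫₀¹ (1-z)^{λ₁-1} z^{λ₂-1} dz
= Γ(λ₁)Γ(λ₂)/Γ(λ₁+λ₂)` as `y → 0⁺`, and consequently the density of the sum of two
independent `GG(λ₁, c, d)` and `GG(λ₂, c, d)` random variables behaves like a positive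
constant multiple of `y^{λ₁+λ₂-1}` near `0`. -/
theorem stmt6 (l1 l2 c d : ℝ) (hl1 : 0 < l1) (hl2 : 0 < l2) (hc : 0 < c) (hd : 0 < d) :
    Tendsto (fun y : ℝ =>
        ∫ z in (0:ℝ)..1,
          (1 - z) ^ (l1 - 1) * z ^ (l2 - 1) *
            (1 + y * (1 - z) / d) ^ (-(l1 + c)) * (1 + y * z / d) ^ (-(l2 + c)))
      (nhdsWithin 0 (Set.Ioi 0))
      (nhds (∫ z in (0:ℝ)..1, (1 - z) ^ (l1 - 1) * z ^ (l2 - 1))) ∧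
    (∫ z in (0:ℝ)..1, (1 - z) ^ (l1 - 1) * z ^ (l2 - 1)) =
      Real.Gamma l1 * Real.Gamma l2 / Real.Gamma (l1 + l2) ∧
    ∃ κ : ℝ, 0 < κ ∧
      Tendsto (fun y : ℝ =>
          (∫ w in (0:ℝ)..y, ggPDF l1 c d (y - w) * ggPDF l2 c d w) /
            y ^ (l1 + l2 - 1))
        (nhdsWithin 0 (Set.Ioi 0)) (nhds κ) := by
  set g : ℝ → ℝ := fun z => (1 - z) ^ (l1 - 1) * z ^ (l2 - 1) with hgdef
  -- complex beta integrand agrees with `g` on `[0,1]`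
  have hEq : Set.EqOn (fun x : ℝ => (x : ℂ) ^ ((l2 : ℂ) - 1) * ((1 : ℂ) - x) ^ ((l1 : ℂ) - 1))
      (fun x : ℝ => ((g x : ℝ) : ℂ)) (Set.uIcc (0:ℝ) 1) := by
    intro x hx
    rw [Set.uIcc_of_le zero_le_one] at hx
    have hx0 : (0:ℝ) ≤ x := hx.1
    have hx1 : (0:ℝ) ≤ 1 - x := by linarith [hx.2]
    simp only [hgdef]
    rw [Complex.ofReal_mul, Complex.ofReal_cpow hx0, Complex.ofReal_cpow hx1]
    push_cast
    ring
  -- the value of the beta integral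
  have hΓ12 : (0:ℝ) < Real.Gamma (l1 + l2) := Real.Gamma_pos_of_pos (by linarith)
  have hbeta : Complex.betaIntegral l2 l1 = ((∫ z in (0:ℝ)..1, g z : ℝ) : ℂ) := by
    rw [Complex.betaIntegral, ← intervalIntegral.integral_ofReal]
    exact intervalIntegral.integral_congr hEq
  have hval : (∫ z in (0:ℝ)..1, g z) = Real.Gamma l1 * Real.Gamma l2 / Real.Gamma (l1 + l2) := by
    have h := Complex.Gamma_mul_Gamma_eq_betaIntegral (s := (l2:ℂ)) (t := (l1:ℂ))
      (by simpa using hl2) (by simpa using hl1)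
    rw [hbeta] at h
    have h' : Real.Gamma l2 * Real.Gamma l1
        = Real.Gamma (l2 + l1) * ∫ z in (0:ℝ)..1, g z := by
      have := h
      rw [← Complex.ofReal_add] at this
      simp only [Complex.Gamma_ofReal] at this
      exact_mod_cast this
    rw [show l2 + l1 = l1 + l2 by ring] at h'
    field_simp
    linarith [h']
  -- integrability of the bound g on Ioc 0 1
  have hIc : IntervalIntegrable (fun x : ℝ => (x : ℂ) ^ ((l2 : ℂ) - 1) * ((1 : ℂ) - x) ^ ((l1 : ℂ) - 1))
      volume 0 1 :=
    Complex.betaIntegral_convergent (by simpa using hl2) (by simpa using hl1)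
  have hgInt : IntegrableOn g (Set.Ioc (0:ℝ) 1) volume := by
    have h1 : IntegrableOn (fun x : ℝ => (x : ℂ) ^ ((l2 : ℂ) - 1) * ((1 : ℂ) - x) ^ ((l1 : ℂ) - 1))
        (Set.Ioc (0:ℝ) 1) volume :=
      (intervalIntegrable_iff_integrableOn_Ioc_of_le zero_le_one).mp hIc
    have h2 := h1.re
    refine h2.congr ?_
    filter_upwards [ae_restrict_mem measurableSet_Ioc] with x hx
    have hxm : x ∈ Set.uIcc (0:ℝ) 1 := by
      rw [Set.uIcc_of_le zero_le_one]; exact ⟨hx.1.le, hx.2⟩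
    have := hEq hxm
    simp only at this
    rw [this]
    simp
  -- Part 1: dominated convergence
  have key : Tendsto (fun y : ℝ =>
      ∫ z in (0:ℝ)..1,
        (1 - z) ^ (l1 - 1) * z ^ (l2 - 1) *
          (1 + y * (1 - z) / d) ^ (-(l1 + c)) * (1 + y * z / d) ^ (-(l2 + c)))
      (nhdsWithin 0 (Set.Ioi 0)) (nhds (∫ z in (0:ℝ)..1, g z)) := by
    simp_rw [intervalIntegral.integral_of_le zero_le_one]
    refine tendsto_integral_filter_of_dominated_convergence g ?_ ?_ ?_ ?_
    · filter_upwards with y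
      apply Measurable.aestronglyMeasurable
      fun_prop
    · filter_upwards [self_mem_nhdsWithin] with y hy
      filter_upwards [ae_restrict_mem measurableSet_Ioc] with z hz
      have hy0 : (0:ℝ) < y := hy
      have h1z : (0:ℝ) ≤ 1 - z := by linarith [hz.2]
      have hz0 : (0:ℝ) ≤ z := hz.1.le
      have hb1 : (1 + y * (1 - z) / d) ^ (-(l1 + c)) ≤ 1 :=
        Real.rpow_le_one_of_one_le_of_nonpos
          (by nlinarith [mul_nonneg hy0.le h1z, div_nonneg (mul_nonneg hy0.le h1z) hd.le])
          (by linarith)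
      have hb2 : (1 + y * z / d) ^ (-(l2 + c)) ≤ 1 :=
        Real.rpow_le_one_of_one_le_of_nonpos
          (by nlinarith [div_nonneg (mul_nonneg hy0.le hz0) hd.le]) (by linarith)
      have hnn1 : (0:ℝ) ≤ (1 - z) ^ (l1 - 1) := Real.rpow_nonneg h1z _
      have hnn2 : (0:ℝ) ≤ z ^ (l2 - 1) := Real.rpow_nonneg hz0 _
      have hnn3 : (0:ℝ) ≤ (1 + y * (1 - z) / d) ^ (-(l1 + c)) := Real.rpow_nonneg (by positivity) _
      have hnn4 : (0:ℝ) ≤ (1 + y * z / d) ^ (-(l2 + c)) := Real.rpow_nonneg (by positivity) _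
      rw [Real.norm_eq_abs, abs_of_nonneg (by positivity)]
      calc (1 - z) ^ (l1 - 1) * z ^ (l2 - 1) * (1 + y * (1 - z) / d) ^ (-(l1 + c))
            * (1 + y * z / d) ^ (-(l2 + c))
          ≤ (1 - z) ^ (l1 - 1) * z ^ (l2 - 1) * 1 * 1 := by gcongr
        _ = g z := by rw [hgdef]; ring
    · exact hgInt
    · filter_upwards [ae_restrict_mem measurableSet_Ioc] with z hz
      have c1 : Continuous fun y : ℝ => 1 + y * (1 - z) / d := by continuity
      have c2 : Continuous fun y : ℝ => 1 + y * z / d := by continuity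
      have t1 : Tendsto (fun y : ℝ => (1 + y * (1 - z) / d) ^ (-(l1 + c)))
          (nhdsWithin 0 (Set.Ioi 0)) (nhds 1) := by
        have h := (c1.tendsto 0).rpow_const (p := -(l1 + c)) (by norm_num)
        simp only [zero_mul, zero_div, add_zero, Real.one_rpow] at h
        exact h.mono_left nhdsWithin_le_nhds
      have t2 : Tendsto (fun y : ℝ => (1 + y * z / d) ^ (-(l2 + c)))
          (nhdsWithin 0 (Set.Ioi 0)) (nhds 1) := by
        have h := (c2.tendsto 0).rpow_const (p := -(l2 + c)) (by norm_num)
        simp only [zero_mul, zero_div, add_zero, Real.one_rpow] at h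
        exact h.mono_left nhdsWithin_le_nhds
      have := (tendsto_const_nhds (x := g z)).mul t1 |>.mul t2
      simpa [hgdef, mul_assoc] using this
  refine ⟨key, hval, ?_⟩
  -- Part 3
  set A1 : ℝ := (1 / d) ^ l1 * (Real.Gamma (l1 + c) / (Real.Gamma l1 * Real.Gamma c)) with hA1
  set A2 : ℝ := (1 / d) ^ l2 * (Real.Gamma (l2 + c) / (Real.Gamma l2 * Real.Gamma c)) with hA2
  have hΓ1 := Real.Gamma_pos_of_pos hl1
  have hΓ2 := Real.Gamma_pos_of_pos hl2
  have hΓc := Real.Gamma_pos_of_pos hc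
  have hΓ1c := Real.Gamma_pos_of_pos (by linarith : (0:ℝ) < l1 + c)
  have hΓ2c := Real.Gamma_pos_of_pos (by linarith : (0:ℝ) < l2 + c)
  have hA1pos : 0 < A1 := by
    rw [hA1]
    exact mul_pos (Real.rpow_pos_of_pos (by positivity) _) (by positivity)
  have hA2pos : 0 < A2 := by
    rw [hA2]
    exact mul_pos (Real.rpow_pos_of_pos (by positivity) _) (by positivity)
  refine ⟨A1 * A2 * (Real.Gamma l1 * Real.Gamma l2 / Real.Gamma (l1 + l2)), by positivity, ?_⟩
  have hconv : ∀ y ∈ Set.Ioi (0:ℝ),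
      (∫ w in (0:ℝ)..y, ggPDF l1 c d (y - w) * ggPDF l2 c d w) / y ^ (l1 + l2 - 1)
        = A1 * A2 * ∫ z in (0:ℝ)..1,
            (1 - z) ^ (l1 - 1) * z ^ (l2 - 1) *
              (1 + y * (1 - z) / d) ^ (-(l1 + c)) * (1 + y * z / d) ^ (-(l2 + c)) := by
    intro y hy
    have hy0 : (0:ℝ) < y := hy
    have hsub : (∫ w in (0:ℝ)..y, ggPDF l1 c d (y - w) * ggPDF l2 c d w)
        = y • ∫ z in (0:ℝ)..1, ggPDF l1 c d (y - y * z) * ggPDF l2 c d (y * z) := by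
      rw [intervalIntegral.smul_integral_comp_mul_left
        (fun w => ggPDF l1 c d (y - w) * ggPDF l2 c d w) y]
      norm_num
    have hinner : (∫ z in (0:ℝ)..1, ggPDF l1 c d (y - y * z) * ggPDF l2 c d (y * z))
        = A1 * A2 * y ^ (l1 - 1) * y ^ (l2 - 1) * ∫ z in (0:ℝ)..1,
            (1 - z) ^ (l1 - 1) * z ^ (l2 - 1) *
              (1 + y * (1 - z) / d) ^ (-(l1 + c)) * (1 + y * z / d) ^ (-(l2 + c)) := by
      rw [← intervalIntegral.integral_const_mul]
      refine intervalIntegral.integral_congr ?_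
      intro z hz
      rw [Set.uIcc_of_le zero_le_one] at hz
      have h1z : (0:ℝ) ≤ 1 - z := by linarith [hz.2]
      have hz0 : (0:ℝ) ≤ z := hz.1
      simp only [ggPDF, ← hA1, ← hA2]
      rw [show y - y * z = y * (1 - z) by ring, Real.mul_rpow hy0.le h1z,
        Real.mul_rpow hy0.le hz0]
      ring
    have hpow : y * y ^ (l1 - 1) * y ^ (l2 - 1) = y ^ (l1 + l2 - 1) := by
      calc y * y ^ (l1 - 1) * y ^ (l2 - 1)
          = y ^ (1:ℝ) * y ^ (l1 - 1) * y ^ (l2 - 1) := by rw [Real.rpow_one]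
        _ = y ^ (1 + (l1 - 1) + (l2 - 1)) := by
            rw [← Real.rpow_add hy0, ← Real.rpow_add hy0]
        _ = y ^ (l1 + l2 - 1) := by ring_nf
    rw [hsub, hinner, smul_eq_mul]
    rw [show y * (A1 * A2 * y ^ (l1 - 1) * y ^ (l2 - 1) * _)
        = (y * y ^ (l1 - 1) * y ^ (l2 - 1)) * (A1 * A2 * ∫ z in (0:ℝ)..1,
            (1 - z) ^ (l1 - 1) * z ^ (l2 - 1) *
              (1 + y * (1 - z) / d) ^ (-(l1 + c)) * (1 + y * z / d) ^ (-(l2 + c))) by ring,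
      hpow]
    field_simp [(Real.rpow_pos_of_pos hy0 (l1 + l2 - 1)).ne']
    refine intervalIntegral.integral_congr (fun z _ => ?_)
    simp only [mul_comm y (1 - z), mul_comm y z]
  have hlim := key.const_mul (A1 * A2)
  rw [hval] at hlim
  refine hlim.congr' ?_
  filter_upwards [self_mem_nhdsWithin] with y hy
  exact (hconv y hy).symm
end

section
/- Let λ, d > 0 and let g be the GG(λ, λ, d) density (i.e., the gamma-gamma density with c = λ). Then ∫₀^d g(Ψ) dΨ = 1/2; that is, the median of the GG(λ, c, d) distribution equals d whenever λ = c. -/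
open MeasureTheory Real Filter Set

lemma gg_complex_eq (l : ℝ) {x : ℝ} (hx : x ∈ Set.Icc (0:ℝ) 1) :
    (x:ℂ) ^ ((l:ℂ) - 1) * ((1:ℂ) - x) ^ ((l:ℂ) - 1)
      = ((x ^ (l-1) * (1-x) ^ (l-1) : ℝ) : ℂ) := by
  rw [Complex.ofReal_mul, Complex.ofReal_cpow hx.1,
    Complex.ofReal_cpow (by linarith [hx.2] : (0:ℝ) ≤ 1 - x)]
  push_cast
  ring

lemma gg_intInt {l : ℝ} (hl : 0 < l) :
    IntervalIntegrable (fun x : ℝ => x ^ (l-1) * (1-x) ^ (l-1)) volume 0 1 := by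
  have hu : 0 < (l:ℂ).re := by simpa using hl
  have hC := Complex.betaIntegral_convergent hu hu
  rw [intervalIntegrable_iff_integrableOn_Ioc_of_le zero_le_one] at hC ⊢
  have h2 : IntegrableOn (fun x : ℝ => ((x ^ (l-1) * (1-x) ^ (l-1) : ℝ) : ℂ))
      (Set.Ioc 0 1) volume :=
    hC.congr_fun (fun x hx => gg_complex_eq l (Set.Ioc_subset_Icc_self hx)) measurableSet_Ioc
  have h3 : Integrable (fun x : ℝ => x ^ (l-1) * (1-x) ^ (l-1)) (volume.restrict (Ioc 0 1)) := by
    simpa using h2.re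
  exact h3

lemma gg_realBeta {l : ℝ} (hl : 0 < l) :
    ∫ x in (0:ℝ)..1, x ^ (l-1) * (1-x) ^ (l-1)
      = Real.Gamma l * Real.Gamma l / Real.Gamma (l + l) := by
  have hu : 0 < (l:ℂ).re := by simpa using hl
  have h := Complex.Gamma_mul_Gamma_eq_betaIntegral hu hu
  have hb : Complex.betaIntegral l l
      = ((∫ x in (0:ℝ)..1, x ^ (l-1) * (1-x) ^ (l-1) : ℝ) : ℂ) := by
    rw [Complex.betaIntegral, ← intervalIntegral.integral_ofReal]
    apply intervalIntegral.integral_congr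
    intro x hx
    rw [Set.uIcc_of_le zero_le_one] at hx
    exact gg_complex_eq l hx
  rw [hb] at h
  rw [show ((l:ℂ) + l) = ((l + l : ℝ) : ℂ) by push_cast; ring] at h
  rw [Complex.Gamma_ofReal, Complex.Gamma_ofReal, ← Complex.ofReal_mul,
    ← Complex.ofReal_mul, Complex.ofReal_inj] at h
  have hGpos := Real.Gamma_pos_of_pos (by linarith : 0 < l + l)
  rw [h]
  field_simp

lemma gg_half {l : ℝ} (hl : 0 < l) :
    ∫ x in (0:ℝ)..(1/2), x ^ (l-1) * (1-x) ^ (l-1)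
      = Real.Gamma l * Real.Gamma l / Real.Gamma (l + l) / 2 := by
  have hint := gg_intInt hl
  have h1 : IntervalIntegrable (fun x : ℝ => x ^ (l-1) * (1-x) ^ (l-1)) volume 0 (1/2) := by
    apply hint.mono_set
    rw [Set.uIcc_of_le (by norm_num : (0:ℝ) ≤ 1/2), Set.uIcc_of_le zero_le_one]
    exact Set.Icc_subset_Icc (le_refl 0) (by norm_num)
  have h2 : IntervalIntegrable (fun x : ℝ => x ^ (l-1) * (1-x) ^ (l-1)) volume (1/2) 1 := by
    apply hint.mono_set
    rw [Set.uIcc_of_le (by norm_num : (1/2:ℝ) ≤ 1), Set.uIcc_of_le zero_le_one]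
    exact Set.Icc_subset_Icc (by norm_num) (le_refl 1)
  have hsymm : ∫ x in (0:ℝ)..(1/2), x ^ (l-1) * (1-x) ^ (l-1)
      = ∫ x in (1/2:ℝ)..1, x ^ (l-1) * (1-x) ^ (l-1) := by
    have hcs := intervalIntegral.integral_comp_sub_left (a := 0) (b := 1/2)
      (fun x : ℝ => x ^ (l-1) * (1-x) ^ (l-1)) 1
    rw [show (1:ℝ) - 1/2 = 1/2 by norm_num, sub_zero] at hcs
    rw [← hcs]
    apply intervalIntegral.integral_congr
    intro x hx
    simp only [sub_sub_cancel]
    ring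
  have hadd := intervalIntegral.integral_add_adjacent_intervals h1 h2
  rw [gg_realBeta hl] at hadd
  rw [← hsymm] at hadd
  linarith

/-- The median of the `GG(λ, c, d)` distribution equals `d` whenever `λ = c`:
`∫₀^d g(Ψ) dΨ = 1/2` for the `GG(λ, λ, d)` density `g`. -/
theorem stmt8 (l d : ℝ) (hl : 0 < l) (hd : 0 < d) :
    ∫ Ψ in (0:ℝ)..d, ggPDF l l d Ψ = 1 / 2 := by
  set A : ℝ := (1 / d) ^ l * (Real.Gamma (l + l) / (Real.Gamma l * Real.Gamma l)) with hA
  have step1 : ∫ Ψ in (0:ℝ)..d, ggPDF l l d Ψ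
      = A * ∫ Ψ in (0:ℝ)..d, Ψ ^ (l-1) * (1 + Ψ / d) ^ (-(l+l)) := by
    rw [← intervalIntegral.integral_const_mul]
    apply intervalIntegral.integral_congr
    intro x _
    simp only [ggPDF, hA]
    ring
  -- change of variables Ψ = d * x / (1 - x)
  have himg : (fun x : ℝ => d * x / (1 - x)) '' Set.Ioo (0:ℝ) (1/2) = Set.Ioo 0 d := by
    ext y
    constructor
    · rintro ⟨x, ⟨hx0, hx2⟩, rfl⟩
      have hu : 0 < 1 - x := by linarith
      constructor
      · positivity
      · rw [div_lt_iff₀ hu]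
        nlinarith
    · rintro ⟨hy0, hyd⟩
      refine ⟨y / (y + d), ⟨by positivity, ?_⟩, ?_⟩
      · rw [div_lt_iff₀ (by linarith)]
        linarith
      · have hyd' : y + d ≠ 0 := by positivity
        field_simp
        simp [hd.ne']
  have hderiv : ∀ x ∈ Set.Ioo (0:ℝ) (1/2),
      HasDerivWithinAt (fun x : ℝ => d * x / (1 - x)) (d / (1 - x) ^ 2)
        (Set.Ioo (0:ℝ) (1/2)) x := by
    intro x hx
    have hu : (1:ℝ) - x ≠ 0 := by
      have := hx.2; have := hx.1; intro h; nlinarith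
    have h := ((hasDerivAt_id x).const_mul d).div ((hasDerivAt_id x).const_sub 1) hu
    have heq : (d * 1 * (1 - x) - d * x * (-1)) / (1 - x) ^ 2 = d / (1 - x) ^ 2 := by
      congr 1
      ring
    simp only [id_eq] at h
    rw [heq] at h
    exact h.hasDerivWithinAt
  have hinj : Set.InjOn (fun x : ℝ => d * x / (1 - x)) (Set.Ioo (0:ℝ) (1/2)) := by
    intro a ha b hb hab
    have h1a : (1:ℝ) - a ≠ 0 := by have := ha.2; intro h; nlinarith
    have h1b : (1:ℝ) - b ≠ 0 := by have := hb.2; intro h; nlinarith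
    simp only at hab
    rw [div_eq_div_iff h1a h1b] at hab
    have hdab : d * a = d * b := by linear_combination hab
    exact mul_left_cancel₀ hd.ne' hdab
  have key : ∫ Ψ in Set.Ioo (0:ℝ) d, Ψ ^ (l-1) * (1 + Ψ / d) ^ (-(l+l))
      = ∫ x in Set.Ioo (0:ℝ) (1/2), d ^ l * (x ^ (l-1) * (1-x) ^ (l-1)) := by
    rw [← himg, integral_image_eq_integral_abs_deriv_smul measurableSet_Ioo hderiv hinj]
    apply setIntegral_congr_fun measurableSet_Ioo
    intro x hx
    obtain ⟨hx0, hx2⟩ := hx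
    have hu : 0 < 1 - x := by linarith
    simp only [smul_eq_mul]
    rw [abs_of_pos (by positivity : (0:ℝ) < d / (1-x)^2)]
    have e0 : 1 + (d * x / (1 - x)) / d = (1-x)⁻¹ := by
      field_simp
      ring
    rw [e0, Real.inv_rpow hu.le, Real.rpow_neg hu.le, inv_inv,
      Real.div_rpow (by positivity) hu.le, Real.mul_rpow hd.le hx0.le]
    have e1 : d * d ^ (l-1) = d ^ l := by
      calc d * d ^ (l-1) = d ^ (1:ℝ) * d ^ (l-1) := by rw [Real.rpow_one]
        _ = d ^ (1 + (l-1)) := (Real.rpow_add hd 1 (l-1)).symm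
        _ = d ^ l := by ring_nf
    have e2 : (1-x) ^ (l+l) = (1-x) ^ (2:ℕ) * ((1-x) ^ (l-1) * (1-x) ^ (l-1)) := by
      rw [← Real.rpow_natCast (1-x) 2, ← Real.rpow_add hu, ← Real.rpow_add hu]
      congr 1
      push_cast
      ring
    have hne : (1-x) ^ (l-1) ≠ 0 := (Real.rpow_pos_of_pos hu _).ne'
    have hne2 : ((1:ℝ)-x) ^ (2:ℕ) ≠ 0 := pow_ne_zero _ (by linarith)
    rw [e2, ← e1]
    field_simp
  have hIoo : ∫ Ψ in (0:ℝ)..d, Ψ ^ (l-1) * (1 + Ψ / d) ^ (-(l+l))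
      = ∫ Ψ in Set.Ioo (0:ℝ) d, Ψ ^ (l-1) * (1 + Ψ / d) ^ (-(l+l)) := by
    rw [intervalIntegral.integral_of_le hd.le, MeasureTheory.integral_Ioc_eq_integral_Ioo]
  have hIoo2 : ∫ x in Set.Ioo (0:ℝ) (1/2), x ^ (l-1) * (1-x) ^ (l-1)
      = ∫ x in (0:ℝ)..(1/2), x ^ (l-1) * (1-x) ^ (l-1) := by
    rw [intervalIntegral.integral_of_le (by norm_num : (0:ℝ) ≤ 1/2),
      MeasureTheory.integral_Ioc_eq_integral_Ioo]
  rw [step1, hIoo, key, MeasureTheory.integral_const_mul, hIoo2, gg_half hl]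
  have hG1 := Real.Gamma_pos_of_pos hl
  have hG2 := Real.Gamma_pos_of_pos (by linarith : 0 < l + l)
  have hdl : (1/d) ^ l = (d ^ l)⁻¹ := by
    rw [one_div, ← Real.inv_rpow hd.le]
  rw [hA, hdl]
  have hdlp : (0:ℝ) < d ^ l := Real.rpow_pos_of_pos hd l
  field_simp
end

section
/- Let λ, d > 0 and c > 1, and let g be the GG(λ, c, d) density. Then the marginal second moment of the normal-gamma-gamma scale mixture equals λ d / (c − 1); that is, ∫₀^∞ ∫_ℝ β² · (2πΨ)^{−1/2} exp(−β²/(2Ψ)) · g(Ψ) dβ dΨ = λ d / (c − 1). In particular the prior variance of a normal-gamma-gamma distributed coefficient β (with β | Ψ ∼ N(0, Ψ) and Ψ ∼ GG(λ, c, d)) is λ d / (c − 1) when c > 1. -/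
open MeasureTheory Real Filter Set intervalIntegral

lemma finalArith (l c d A B G1 G2 G3 : ℝ) (hAB : A*B = 1) (hG1 : G1 ≠ 0) (hG2 : G2 ≠ 0)
    (hG3 : G3 ≠ 0) (hc : 1 < c) (hd : 0 < d) :
    A * (G3/(G1*((c-1)*G2))) * (d * (B * (l*G1*G2/G3))) = l*d/(c-1) := by
  have hc1 : c - 1 ≠ 0 := by linarith
  field_simp
  linear_combination l * hAB

lemma realBeta {u v : ℝ} (hu : 0 < u) (hv : 0 < v) :
    ∫ t in (0:ℝ)..1, t ^ (u-1) * (1-t) ^ (v-1) = Gamma u * Gamma v / Gamma (u+v) := by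
  have h := Complex.Gamma_mul_Gamma_eq_betaIntegral (s := u) (t := v)
    (by simpa using hu) (by simpa using hv)
  have key : Complex.betaIntegral u v
      = ((∫ t in (0:ℝ)..1, t ^ (u-1) * (1-t) ^ (v-1) : ℝ) : ℂ) := by
    rw [Complex.betaIntegral, ← intervalIntegral.integral_ofReal]
    refine intervalIntegral.integral_congr fun x hx => ?_
    rw [Set.uIcc_of_le (by norm_num : (0:ℝ) ≤ 1)] at hx
    push_cast
    rw [Complex.ofReal_cpow hx.1, Complex.ofReal_cpow (by linarith [hx.2])]
    push_cast
    ring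
  rw [key, ← Complex.ofReal_add, Complex.Gamma_ofReal, Complex.Gamma_ofReal,
    Complex.Gamma_ofReal, ← Complex.ofReal_mul, ← Complex.ofReal_mul] at h
  have h' := Complex.ofReal_inj.mp h
  have hne : Gamma (u+v) ≠ 0 := (Gamma_pos_of_pos (by linarith)).ne'
  field_simp [hne]
  linarith [h']

lemma iooBeta {u v : ℝ} (hu : 0 < u) (hv : 0 < v) :
    ∫ t in Ioo (0:ℝ) 1, t ^ (u-1) * (1-t) ^ (v-1) = Gamma u * Gamma v / Gamma (u+v) := by
  rw [← realBeta hu hv, intervalIntegral.integral_of_le (by norm_num : (0:ℝ) ≤ 1),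
    MeasureTheory.integral_Ioc_eq_integral_Ioo]

lemma ioiBeta {a b : ℝ} (ha : 0 < a) (hb : 0 < b) :
    ∫ x in Ioi (0:ℝ), x ^ (a-1) * (1+x) ^ (-(a+b)) = Gamma a * Gamma b / Gamma (a+b) := by
  have himg : (fun t : ℝ => t / (1-t)) '' Ioo 0 1 = Ioi 0 := by
    ext y
    constructor
    · rintro ⟨t, ⟨ht0, ht1⟩, rfl⟩
      exact div_pos ht0 (by linarith)
    · intro hy
      refine ⟨y / (1+y), ⟨div_pos hy (by linarith [mem_Ioi.mp hy]), ?_⟩, ?_⟩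
      · rw [div_lt_one (by linarith [mem_Ioi.mp hy])]; linarith [mem_Ioi.mp hy]
      · have h1 : (0:ℝ) < 1 + y := by linarith [mem_Ioi.mp hy]
        field_simp
        ring
  have hderiv : ∀ t ∈ Ioo (0:ℝ) 1, HasDerivWithinAt (fun t : ℝ => t / (1-t))
      ((1-t)⁻¹ ^ 2) (Ioo 0 1) t := by
    intro t ht
    have hne : (1:ℝ) - t ≠ 0 := by linarith [ht.2]
    have := (hasDerivAt_id t).div ((hasDerivAt_const t 1).sub (hasDerivAt_id t)) hne
    refine this.hasDerivWithinAt.congr_deriv ?_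
    simp only [Pi.sub_apply, id]
    field_simp
    ring
  have hinj : InjOn (fun t : ℝ => t / (1-t)) (Ioo 0 1) := by
    intro t1 h1 t2 h2 he
    have hn1 : (1:ℝ) - t1 ≠ 0 := by linarith [h1.2]
    have hn2 : (1:ℝ) - t2 ≠ 0 := by linarith [h2.2]
    field_simp at he
    linarith
  have := MeasureTheory.integral_image_eq_integral_abs_deriv_smul measurableSet_Ioo hderiv hinj
    (fun x => x ^ (a-1) * (1+x) ^ (-(a+b)))
  rw [himg] at this
  rw [this, ← iooBeta ha hb]
  refine setIntegral_congr_fun measurableSet_Ioo fun t ht => ?_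
  have ht0 := ht.1
  have ht1 : (0:ℝ) < 1 - t := by linarith [ht.2]
  have hft : (0:ℝ) < t / (1-t) := div_pos ht0 ht1
  have h1f : 1 + t / (1-t) = (1-t)⁻¹ := by field_simp; ring
  have e2 : (1-t)⁻¹^2 = (1-t) ^ (-2:ℝ) := by
    rw [inv_pow, ← rpow_natCast (1-t) 2, ← rpow_neg ht1.le]; norm_num
  have e3 : ((1-t)⁻¹) ^ (-(a+b)) = (1-t) ^ (a+b) := by
    rw [← rpow_neg_one (1-t), ← rpow_mul ht1.le]; norm_num
  have e4 : t ^ (a-1) / (1-t) ^ (a-1) = t ^ (a-1) * (1-t) ^ (-(a-1)) := by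
    rw [div_eq_mul_inv, ← rpow_neg ht1.le]
  rw [smul_eq_mul, abs_of_pos (by positivity : (0:ℝ) < (1-t)⁻¹^2), e2, h1f, e3, div_rpow ht0.le ht1.le, e4, mul_comm, mul_assoc, mul_assoc,
    ← rpow_add ht1, ← rpow_add ht1]
  congr 1
  ring

lemma gaussSecond {Ψ : ℝ} (hΨ : 0 < Ψ) :
    ∫ β : ℝ, β ^ 2 * ((2 * π * Ψ) ^ (-(1:ℝ)/2) * Real.exp (-(β ^ 2 / (2 * Ψ)))) = Ψ := by
  have habs := integral_comp_abs
    (f := fun x : ℝ => x ^ 2 * ((2 * π * Ψ) ^ (-(1:ℝ)/2) * Real.exp (-(x ^ 2 / (2 * Ψ)))))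
  simp only [sq_abs] at habs
  rw [habs]
  have hb : (0:ℝ) < 1 / (2 * Ψ) := by positivity
  have hsub := MeasureTheory.integral_comp_rpow_Ioi_of_pos
    (g := fun y : ℝ => (1/2) * ((2 * π * Ψ) ^ (-(1:ℝ)/2) *
      (y ^ ((3:ℝ)/2 - 1) * Real.exp (-(1 / (2 * Ψ) * y))))) (p := 2) zero_lt_two
  beta_reduce at hsub
  have hgamma := Real.integral_rpow_mul_exp_neg_mul_Ioi (a := (3:ℝ)/2) (r := 1 / (2 * Ψ))
    (by norm_num) hb
  have hleft : ∫ x in Ioi (0:ℝ),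
      ((2:ℝ) * x ^ ((2:ℝ) - 1)) • ((1/2) * ((2 * π * Ψ) ^ (-(1:ℝ)/2) *
        ((x ^ (2:ℝ)) ^ ((3:ℝ)/2 - 1) * Real.exp (-(1 / (2 * Ψ) * x ^ (2:ℝ))))))
      = ∫ x in Ioi (0:ℝ), x ^ 2 * ((2 * π * Ψ) ^ (-(1:ℝ)/2) * Real.exp (-(x ^ 2 / (2 * Ψ)))) := by
    refine setIntegral_congr_fun measurableSet_Ioi fun x hx => ?_
    have hx0 : (0:ℝ) < x := hx
    have h1 : x ^ ((2:ℝ) - 1) = x := by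
      rw [show (2:ℝ) - 1 = 1 by norm_num, rpow_one]
    have h2 : x ^ (2:ℝ) = x ^ 2 := by rw [← rpow_natCast x 2]; norm_num
    have h3 : (x ^ (2:ℝ)) ^ ((3:ℝ)/2 - 1) = x := by
      rw [← rpow_mul hx0.le]
      norm_num
    rw [smul_eq_mul, h1, h3, h2]
    rw [show 1 / (2 * Ψ) * x ^ 2 = x ^ 2 / (2 * Ψ) by ring]
    ring
  rw [← hleft, hsub, MeasureTheory.integral_const_mul, MeasureTheory.integral_const_mul,
    hgamma]
  have hg32 : Real.Gamma (3/2) = Real.sqrt π / 2 := by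
    rw [show (3:ℝ)/2 = 1/2 + 1 by norm_num, Real.Gamma_add_one (by norm_num),
      Real.Gamma_one_half_eq]
    ring
  rw [hg32, one_div_one_div]
  have h2Ψ : (0:ℝ) < 2 * Ψ := by positivity
  have hsplit : (2 * π * Ψ) ^ (-(1:ℝ)/2) = (2 * Ψ) ^ (-(1:ℝ)/2) * π ^ (-(1:ℝ)/2) := by
    rw [← mul_rpow h2Ψ.le pi_pos.le]
    ring_nf
  have hpi : π ^ (-(1:ℝ)/2) * Real.sqrt π = 1 := by
    rw [Real.sqrt_eq_rpow, ← rpow_add pi_pos]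
    norm_num
  have h2 : (2 * Ψ) ^ (-(1:ℝ)/2) * (2 * Ψ) ^ ((3:ℝ)/2) = 2 * Ψ := by
    rw [← rpow_add h2Ψ]
    norm_num
  rw [hsplit]
  calc 2 * (1/2 * ((2 * Ψ) ^ (-(1:ℝ)/2) * π ^ (-(1:ℝ)/2) * ((2 * Ψ) ^ ((3:ℝ)/2) * (√π / 2))))
      = ((2 * Ψ) ^ (-(1:ℝ)/2) * (2 * Ψ) ^ ((3:ℝ)/2)) * (π ^ (-(1:ℝ)/2) * √π) / 2 := by ring
    _ = Ψ := by rw [hpi, h2]; ring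


/-- The marginal second moment (prior variance) of the normal-gamma-gamma scale mixture
`β | Ψ ∼ N(0, Ψ)`, `Ψ ∼ GG(λ, c, d)` equals `λ d / (c - 1)` when `c > 1`. -/
theorem stmt10 (l c d : ℝ) (hl : 0 < l) (hc : 1 < c) (hd : 0 < d) :
    ∫ Ψ in Set.Ioi (0:ℝ),
        (∫ β : ℝ, β ^ 2 * ((2 * π * Ψ) ^ (-(1:ℝ)/2) * Real.exp (-(β ^ 2 / (2 * Ψ)))) *
          ggPDF l c d Ψ) = l * d / (c - 1) := by
  have h1 : ∀ Ψ ∈ Ioi (0:ℝ),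
      (∫ β : ℝ, β ^ 2 * ((2 * π * Ψ) ^ (-(1:ℝ)/2) * Real.exp (-(β ^ 2 / (2 * Ψ)))) *
        ggPDF l c d Ψ)
      = ((1/d)^l * (Gamma (l+c) / (Gamma l * Gamma c)))
          * (Ψ ^ ((l+1)-1) * (1 + Ψ/d) ^ (-(l+c))) := by
    intro Ψ hΨ
    have hΨ0 : (0:ℝ) < Ψ := hΨ
    rw [MeasureTheory.integral_mul_const, gaussSecond hΨ0]
    unfold ggPDF
    rw [show (l+1)-1 = (l-1)+1 by ring, rpow_add_one hΨ0.ne']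
    ring
  rw [setIntegral_congr_fun measurableSet_Ioi h1, MeasureTheory.integral_const_mul]
  have hs := MeasureTheory.integral_comp_mul_left_Ioi
    (g := fun x => x ^ ((l+1)-1) * (1 + x/d) ^ (-(l+c))) 0 hd
  beta_reduce at hs
  rw [smul_eq_mul] at hs
  have hs' : ∫ x in Ioi (0:ℝ), x ^ ((l+1)-1) * (1 + x/d) ^ (-(l+c))
      = d * ∫ x in Ioi (0:ℝ), (d*x) ^ ((l+1)-1) * (1 + (d*x)/d) ^ (-(l+c)) := by
    rw [hs, mul_zero]; field_simp
  rw [hs']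
  have h2 : ∀ x ∈ Ioi (0:ℝ), (d*x) ^ ((l+1)-1) * (1 + (d*x)/d) ^ (-(l+c))
      = d ^ ((l+1)-1) * (x ^ ((l+1)-1) * (1+x) ^ (-((l+1)+(c-1)))) := by
    intro x hx
    have hx0 : (0:ℝ) < x := hx
    rw [mul_rpow hd.le hx0.le, mul_div_cancel_left₀ _ hd.ne',
      show -((l+1)+(c-1)) = -(l+c) by ring]
    ring
  rw [setIntegral_congr_fun measurableSet_Ioi h2, MeasureTheory.integral_const_mul,
    ioiBeta (by linarith) (by linarith : (0:ℝ) < c - 1)]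
  have hgl : Gamma (l+1) = l * Gamma l := Gamma_add_one hl.ne'
  have hgc : Gamma c = (c-1) * Gamma (c-1) := by
    rw [show c = (c-1)+1 by ring, Gamma_add_one (by linarith : c-1 ≠ 0)]
    ring_nf
  have hlc : (l+1)+(c-1) = l+c := by ring
  have hdl : (1/d)^l * d^((l+1)-1) = 1 := by
    rw [show (l+1)-1 = l by ring, ← mul_rpow (by positivity) hd.le, one_div,
      inv_mul_cancel₀ hd.ne', one_rpow]
  have hGl : (0:ℝ) < Gamma l := Gamma_pos_of_pos hl
  have hGc1 : (0:ℝ) < Gamma (c-1) := Gamma_pos_of_pos (by linarith)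
  have hGlc : (0:ℝ) < Gamma (l+c) := Gamma_pos_of_pos (by linarith)
  rw [hlc, hgl, hgc]
  exact finalArith l c d _ _ _ _ _ hdl hGl.ne' hGc1.ne' hGlc.ne' hc hd
end

section
/- Let λ, μ, Ψ > 0. Then the GG(λ, c, c/μ) density evaluated at Ψ converges, as c → ∞, to the Gamma(λ, μ) density at Ψ; that is, lim_{c→∞} (μ/c)^λ (Γ(λ+c)/(Γ(λ)Γ(c))) Ψ^{λ−1} (1 + μΨ/c)^{−(λ+c)} = (μ^λ/Γ(λ)) Ψ^{λ−1} e^{−μΨ}. (The normal-gamma distribution arises from the normal-gamma-gamma distribution when c/d = μ and c → ∞.) -/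
open MeasureTheory Real Filter Set

private lemma gamma_convex_aux (a b x y : ℝ) (ha : 0 ≤ a) (hb : 0 ≤ b) (hab : a + b = 1)
    (hx : 0 < x) (hy : 0 < y) :
    Real.Gamma (a * x + b * y) ≤ Real.Gamma x ^ a * Real.Gamma y ^ b := by
  have hpos : 0 < a * x + b * y := by
    have h1 : a * min x y ≤ a * x := mul_le_mul_of_nonneg_left (min_le_left x y) ha
    have h2 : b * min x y ≤ b * y := mul_le_mul_of_nonneg_left (min_le_right x y) hb
    have hm : 0 < min x y := lt_min hx hy
    nlinarith
  have h := Real.convexOn_log_Gamma.2 (mem_Ioi.mpr hx) (mem_Ioi.mpr hy) ha hb hab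
  simp only [Function.comp_apply, smul_eq_mul] at h
  calc Real.Gamma (a * x + b * y)
      = Real.exp (Real.log (Real.Gamma (a * x + b * y))) :=
        (Real.exp_log (Real.Gamma_pos_of_pos hpos)).symm
    _ ≤ Real.exp (a * Real.log (Real.Gamma x) + b * Real.log (Real.Gamma y)) :=
        Real.exp_le_exp.mpr h
    _ = Real.Gamma x ^ a * Real.Gamma y ^ b := by
        rw [Real.exp_add, mul_comm a, mul_comm b,
          ← Real.rpow_def_of_pos (Real.Gamma_pos_of_pos hx),
          ← Real.rpow_def_of_pos (Real.Gamma_pos_of_pos hy)]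

private lemma tendsto_add_div_self (a : ℝ) :
    Tendsto (fun x : ℝ => (x + a) / x) atTop (nhds 1) := by
  have h : Tendsto (fun x : ℝ => 1 + a * x⁻¹) atTop (nhds (1 + a * 0)) :=
    tendsto_const_nhds.add (tendsto_inv_atTop_zero.const_mul a)
  rw [mul_zero, add_zero] at h
  refine h.congr' ?_
  filter_upwards [eventually_gt_atTop 0] with x hx
  field_simp

private lemma tendsto_div_add_self (a : ℝ) :
    Tendsto (fun x : ℝ => x / (x + a)) atTop (nhds 1) := by
  have h := ((tendsto_add_div_self a).inv₀ one_ne_zero)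
  rw [inv_one] at h
  refine h.congr (fun x => ?_)
  rw [inv_div]

private lemma gamma_ratio_base (s : ℝ) (hs0 : 0 < s) (hs1 : s ≤ 1) :
    Tendsto (fun x : ℝ => Real.Gamma (x + s) / (Real.Gamma x * x ^ s)) atTop (nhds 1) := by
  have hlow : Tendsto (fun x : ℝ => (x / (x + s)) ^ (1 - s)) atTop (nhds 1) := by
    have h := (tendsto_div_add_self s).rpow_const (p := 1 - s) (Or.inl one_ne_zero)
    rwa [Real.one_rpow] at h
  refine tendsto_of_tendsto_of_tendsto_of_le_of_le' hlow tendsto_const_nhds ?_ ?_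
  · -- lower bound
    filter_upwards [eventually_gt_atTop 0] with x hx
    have hxs : 0 < x + s := by linarith
    have hG : 0 < Real.Gamma x := Real.Gamma_pos_of_pos hx
    have hGs : 0 < Real.Gamma (x + s) := Real.Gamma_pos_of_pos hxs
    have key : x * Real.Gamma x ≤ Real.Gamma (x + s) * (x + s) ^ (1 - s) := by
      have h := gamma_convex_aux s (1 - s) (x + s) (x + 1 + s) hs0.le (by linarith)
        (by ring) hxs (by linarith)
      have harg : s * (x + s) + (1 - s) * (x + 1 + s) = x + 1 := by ring
      rw [harg, Real.Gamma_add_one hx.ne'] at h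
      have h2 : x + 1 + s = (x + s) + 1 := by ring
      rw [h2, Real.Gamma_add_one hxs.ne', Real.mul_rpow hxs.le hGs.le] at h
      calc x * Real.Gamma x ≤ Real.Gamma (x + s) ^ s *
            ((x + s) ^ (1 - s) * Real.Gamma (x + s) ^ (1 - s)) := h
        _ = (Real.Gamma (x + s) ^ s * Real.Gamma (x + s) ^ (1 - s)) * (x + s) ^ (1 - s) := by
            ring
        _ = Real.Gamma (x + s) * (x + s) ^ (1 - s) := by
            rw [← Real.rpow_add hGs]
            norm_num
    rw [Real.div_rpow hx.le hxs.le, div_le_div_iff₀ (Real.rpow_pos_of_pos hxs _)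
      (by positivity)]
    calc x ^ (1 - s) * (Real.Gamma x * x ^ s) = (x ^ (1 - s) * x ^ s) * Real.Gamma x := by ring
      _ = x * Real.Gamma x := by rw [← Real.rpow_add hx]; norm_num
      _ ≤ Real.Gamma (x + s) * (x + s) ^ (1 - s) := key
  · -- upper bound
    filter_upwards [eventually_gt_atTop 0] with x hx
    have hG : 0 < Real.Gamma x := Real.Gamma_pos_of_pos hx
    rw [div_le_one (by positivity)]
    have h := gamma_convex_aux (1 - s) s x (x + 1) (by linarith) hs0.le (by ring) hx
      (by linarith)
    have harg : (1 - s) * x + s * (x + 1) = x + s := by ring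
    rw [harg, Real.Gamma_add_one hx.ne', Real.mul_rpow hx.le hG.le] at h
    calc Real.Gamma (x + s) ≤ Real.Gamma x ^ (1 - s) * (x ^ s * Real.Gamma x ^ s) := h
      _ = (Real.Gamma x ^ (1 - s) * Real.Gamma x ^ s) * x ^ s := by ring
      _ = Real.Gamma x * x ^ s := by rw [← Real.rpow_add hG]; norm_num

private lemma gamma_ratio_step (n : ℕ) : ∀ s : ℝ, 0 < s → s ≤ 1 →
    Tendsto (fun x : ℝ => Real.Gamma (x + (s + n)) / (Real.Gamma x * x ^ (s + (n : ℝ))))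
      atTop (nhds 1) := by
  induction n with
  | zero => intro s hs0 hs1; simpa using gamma_ratio_base s hs0 hs1
  | succ n ih =>
    intro s hs0 hs1
    have h := (ih s hs0 hs1).mul (tendsto_add_div_self (s + n))
    rw [mul_one] at h
    refine h.congr' ?_
    filter_upwards [eventually_gt_atTop 0] with x hx
    have hxs : 0 < x + (s + n) := by positivity
    have hG : 0 < Real.Gamma x := Real.Gamma_pos_of_pos hx
    have h1 : x + (s + ((n : ℝ) + 1)) = (x + (s + n)) + 1 := by push_cast; ring
    have h2 : x ^ (s + ((n : ℝ) + 1)) = x ^ (s + (n : ℝ)) * x := by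
      rw [show s + ((n : ℝ) + 1) = (s + (n : ℝ)) + 1 by ring, Real.rpow_add hx, Real.rpow_one]
    push_cast
    rw [h1, Real.Gamma_add_one hxs.ne', h2]
    have hxp : x ^ (s + (n : ℝ)) ≠ 0 := (Real.rpow_pos_of_pos hx _).ne'
    field_simp

private lemma gamma_ratio_tendsto (l : ℝ) (hl : 0 < l) :
    Tendsto (fun x : ℝ => Real.Gamma (x + l) / (Real.Gamma x * x ^ l)) atTop (nhds 1) := by
  obtain ⟨n, s, hs0, hs1, rfl⟩ : ∃ (n : ℕ) (s : ℝ), 0 < s ∧ s ≤ 1 ∧ s + n = l := by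
    refine ⟨⌈l⌉₊ - 1, l - (⌈l⌉₊ - 1 : ℕ), ?_, ?_, by ring⟩
    · have h1 : 1 ≤ ⌈l⌉₊ := Nat.one_le_iff_ne_zero.mpr (by
        simpa using (Nat.ceil_pos.mpr hl).ne')
      have h2 : (⌈l⌉₊ : ℝ) < l + 1 := Nat.ceil_lt_add_one hl.le
      have h3 : ((⌈l⌉₊ - 1 : ℕ) : ℝ) = (⌈l⌉₊ : ℝ) - 1 := by
        push_cast [Nat.cast_sub h1]; ring
      rw [h3]; linarith
    · have h1 : 1 ≤ ⌈l⌉₊ := Nat.one_le_iff_ne_zero.mpr (by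
        simpa using (Nat.ceil_pos.mpr hl).ne')
      have h2 : l ≤ (⌈l⌉₊ : ℝ) := Nat.le_ceil l
      have h3 : ((⌈l⌉₊ - 1 : ℕ) : ℝ) = (⌈l⌉₊ : ℝ) - 1 := by
        push_cast [Nat.cast_sub h1]; ring
      rw [h3]; linarith
  exact gamma_ratio_step _ _ hs0 hs1

/-- The `GG(λ, c, c/μ)` density at `Ψ` converges, as `c → ∞`, to the `Gamma(λ, μ)`
density at `Ψ`: the normal-gamma distribution arises from the normal-gamma-gamma
distribution when `c/d = μ` and `c → ∞`. -/
theorem stmt12 (l μ Ψ : ℝ) (hl : 0 < l) (hμ : 0 < μ) (hΨ : 0 < Ψ) :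
    Tendsto (fun c : ℝ =>
        (μ / c) ^ l * (Real.Gamma (l + c) / (Real.Gamma l * Real.Gamma c)) *
          Ψ ^ (l - 1) * (1 + μ * Ψ / c) ^ (-(l + c)))
      atTop
      (nhds ((μ ^ l / Real.Gamma l) * Ψ ^ (l - 1) * Real.exp (-(μ * Ψ)))) := by
  set t := μ * Ψ with ht_def
  have ht : 0 < t := mul_pos hμ hΨ
  -- limit of the exponential factor
  have hbase : Tendsto (fun c : ℝ => 1 + t / c) atTop (nhds 1) := by
    have h : Tendsto (fun c : ℝ => 1 + t * c⁻¹) atTop (nhds (1 + t * 0)) :=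
      tendsto_const_nhds.add (tendsto_inv_atTop_zero.const_mul t)
    rw [mul_zero, add_zero] at h
    exact h.congr (fun c => by rw [div_eq_mul_inv])
  have hexp : Tendsto (fun c : ℝ => (1 + t / c) ^ (-(l + c))) atTop (nhds (Real.exp (-t))) := by
    have hA : Tendsto (fun c : ℝ => (1 + t / c) ^ c) atTop (nhds (Real.exp t)) :=
      tendsto_one_add_div_rpow_exp t
    have hC : Tendsto (fun c : ℝ => (1 + t / c) ^ (-l)) atTop (nhds 1) := by
      have h := hbase.rpow_const (p := -l) (Or.inl one_ne_zero)
      rwa [Real.one_rpow] at h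
    have h := hC.mul (hA.inv₀ (Real.exp_pos t).ne')
    rw [one_mul, ← Real.exp_neg] at h
    refine h.congr' ?_
    filter_upwards [eventually_gt_atTop (0 : ℝ)] with c hc
    have hb : (0 : ℝ) < 1 + t / c := by positivity
    rw [← Real.rpow_neg hb.le, ← Real.rpow_add hb]
    ring_nf
  -- limit of the Gamma ratio factor
  have hratio : Tendsto (fun c : ℝ => Real.Gamma (l + c) / (Real.Gamma c * c ^ l))
      atTop (nhds 1) := by
    have h := gamma_ratio_tendsto l hl
    refine h.congr (fun c => by rw [add_comm])
  have hmain : Tendsto (fun c : ℝ =>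
      ((μ ^ l / Real.Gamma l) * Ψ ^ (l - 1)) *
        (Real.Gamma (l + c) / (Real.Gamma c * c ^ l)) * ((1 + t / c) ^ (-(l + c))))
      atTop (nhds ((μ ^ l / Real.Gamma l) * Ψ ^ (l - 1) * Real.exp (-t))) := by
    have h := ((tendsto_const_nhds (x := (μ ^ l / Real.Gamma l) * Ψ ^ (l - 1))).mul hratio).mul hexp
    rwa [mul_one] at h
  refine hmain.congr' ?_
  filter_upwards [eventually_gt_atTop (0 : ℝ)] with c hc
  have hG : 0 < Real.Gamma l := Real.Gamma_pos_of_pos hl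
  have hGc : 0 < Real.Gamma c := Real.Gamma_pos_of_pos hc
  have hcl : 0 < c ^ l := Real.rpow_pos_of_pos hc l
  rw [Real.div_rpow hμ.le hc.le]
  field_simp
end
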